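/- arXiv:1903.01755 — 3 statements merged into one kernel-verified Lean document; each statement's English description precedes it below -/
import Mathlib

section
/- For any finite non-solvable group G, the solvable graph Γ_s(G) is not a star graph, i.e., there is no vertex u of Γ_s(G) such that the edges of Γ_s(G) are exactly those joining u to every other vertex. -/
/-- The solvabilizer of `u` in `G`: the set of `v` such that `⟨u, v⟩` is solvable. -/
def solvabilizer (G : Type*) [Group G] (u : G) : Set G :=
  {v | IsSolvable (Subgroup.closure {u, v})}

/-- The solvable radical `Sol(G)`: elements `u` with `⟨u, v⟩` solvable for all `v`. -/
def solRadical (G : Type*) [Group G] : Set G :=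
  {u | ∀ v : G, IsSolvable (Subgroup.closure {u, v})}

/-- The solvable graph of `G`: vertex set `G \ Sol(G)`, two distinct vertices `u`, `v`
adjacent iff `⟨u, v⟩` is solvable. -/
def solvableGraph (G : Type*) [Group G] : SimpleGraph {u : G // u ∉ solRadical G} where
  Adj u v := u ≠ v ∧ IsSolvable (Subgroup.closure {(u : G), (v : G)})
  symm := by
    constructor
    rintro u v ⟨hne, hs⟩
    exact ⟨hne.symm, by rwa [Set.pair_comm]⟩
  loopless := by constructor; rintro u ⟨hne, _⟩; exact hne rfl

/-- The solvable graph of a finite non-solvable group is not a star graph. -/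
theorem solvableGraph_not_star {G : Type*} [Group G] [Fintype G] (hG : ¬ IsSolvable G) :
    ¬ ∃ u : {x : G // x ∉ solRadical G},
        ∀ v w : {x : G // x ∉ solRadical G},
          (solvableGraph G).Adj v w ↔ ((v = u ∧ w ≠ u) ∨ (w = u ∧ v ≠ u)) := by
  rintro ⟨u, hstar⟩
  apply u.2
  intro v
  by_cases hv : v ∈ solRadical G
  · have := hv u.1
    rwa [Set.pair_comm] at this
  · by_cases hvu : (⟨v, hv⟩ : {x : G // x ∉ solRadical G}) = u
    · have hveq : v = (u : G) := congrArg Subtype.val hvu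
      subst hveq
      rw [Set.pair_eq_singleton]
      apply isSolvable_of_comm
      rintro ⟨a, ha⟩ ⟨b, hb⟩
      rw [Subgroup.mem_closure_singleton] at ha hb
      obtain ⟨m, rfl⟩ := ha
      obtain ⟨n, rfl⟩ := hb
      ext
      exact (zpow_mul_comm _ m n)
    · have hadj := (hstar ⟨v, hv⟩ u).mpr (Or.inr ⟨rfl, hvu⟩)
      have := hadj.2
      rwa [Set.pair_comm] at this
end

section
/- For any finite non-solvable group G, the solvable graph Γ_s(G) is not complete bipartite, i.e., there is no partition of the vertex set G \ Sol(G) into two nonempty parts A₁, A₂ such that two distinct vertices are adjacent in Γ_s(G) if and only if they lie in different parts. -/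
section Aux

variable {G : Type*} [Group G]

lemma my_solvable_of_le {H K : Subgroup G} [Group.IsSolvable H] (h : K ≤ H) : IsSolvable K :=
  solvable_of_solvable_injective (Subgroup.inclusion_injective h)

lemma mem_closure_pair_left (x y : G) : x ∈ Subgroup.closure {x, y} :=
  Subgroup.subset_closure (Set.mem_insert _ _)

lemma mem_closure_pair_right (x y : G) : y ∈ Subgroup.closure {x, y} :=
  Subgroup.subset_closure (Set.mem_insert_of_mem _ rfl)

lemma closure_pair_le {x y : G} {H : Subgroup G} (hx : x ∈ H) (hy : y ∈ H) :
    Subgroup.closure {x, y} ≤ H :=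
  (Subgroup.closure_le _).mpr (Set.insert_subset_iff.mpr ⟨hx, Set.singleton_subset_iff.mpr hy⟩)

lemma solvable_closure_pair_self (x : G) : IsSolvable (Subgroup.closure {x, x}) :=
  by
  haveI : Group.IsSolvable (Subgroup.zpowers x) := Group.isSolvable_of_comm (fun a b => by
    obtain ⟨_, m, rfl⟩ := a; obtain ⟨_, n, rfl⟩ := b; exact Subtype.ext (zpow_mul_comm x m n))
  exact my_solvable_of_le (closure_pair_le (Subgroup.mem_zpowers x) (Subgroup.mem_zpowers x))

lemma solvable_closure_pair_inv (x : G) : IsSolvable (Subgroup.closure {x, x⁻¹}) :=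
  by
  haveI : Group.IsSolvable (Subgroup.zpowers x) := Group.isSolvable_of_comm (fun a b => by
    obtain ⟨_, m, rfl⟩ := a; obtain ⟨_, n, rfl⟩ := b; exact Subtype.ext (zpow_mul_comm x m n))
  exact my_solvable_of_le (closure_pair_le (Subgroup.mem_zpowers x) (inv_mem (Subgroup.mem_zpowers x)))

lemma closure_pair_inv (x y : G) :
    Subgroup.closure {x⁻¹, y} = Subgroup.closure {x, y} := by
  apply le_antisymm
  · exact closure_pair_le (inv_mem (mem_closure_pair_left x y)) (mem_closure_pair_right x y)
  · refine closure_pair_le ?_ (mem_closure_pair_right x⁻¹ y)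
    simpa using inv_mem (mem_closure_pair_left x⁻¹ y)

lemma solvable_closure_of_comm {x y : G} (h : x * y = y * x) :
    IsSolvable (Subgroup.closure {x, y}) := by
  have hcomm : ∀ a ∈ ({x, y} : Set G), ∀ b ∈ ({x, y} : Set G), a * b = b * a := by
    intro a ha b hb
    rcases ha with rfl | ha <;> rcases hb with rfl | hb
    · rfl
    · rw [Set.mem_singleton_iff] at hb; subst hb; exact h
    · rw [Set.mem_singleton_iff] at ha; subst ha; exact h.symm
    · rw [Set.mem_singleton_iff] at ha hb; subst ha; subst hb; rfl
  letI : CommGroup (Subgroup.closure ({x, y} : Set G)) :=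
    Subgroup.closureCommGroupOfComm hcomm
  exact Group.isSolvable_of_comm (fun a b => mul_comm a b)

end Aux

/-- The solvable graph of a finite non-solvable group is not complete bipartite. -/
theorem solvableGraph_not_completeBipartite {G : Type*} [Group G] [Fintype G]
    (hG : ¬ IsSolvable G) :
    ¬ ∃ A₁ A₂ : Set {x : G // x ∉ solRadical G},
        A₁.Nonempty ∧ A₂.Nonempty ∧ A₁ ∪ A₂ = Set.univ ∧ A₁ ∩ A₂ = ∅ ∧
        ∀ v w : {x : G // x ∉ solRadical G}, v ≠ w →
          ((solvableGraph G).Adj v w ↔ ((v ∈ A₁ ∧ w ∈ A₂) ∨ (v ∈ A₂ ∧ w ∈ A₁))) := by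
  rintro ⟨A₁, A₂, ⟨u, hu⟩, -, huniv, hdisj, hbip⟩
  -- basic facts about the partition
  have hmem : ∀ x : {x : G // x ∉ solRadical G}, x ∈ A₁ ∨ x ∈ A₂ := by
    intro x
    have : x ∈ A₁ ∪ A₂ := by rw [huniv]; trivial
    exact this
  have hnotboth : ∀ x : {x : G // x ∉ solRadical G}, x ∈ A₁ → x ∈ A₂ → False := by
    intro x h1 h2
    have : x ∈ A₁ ∩ A₂ := ⟨h1, h2⟩
    rw [hdisj] at this
    exact this
  have hcross : ∀ x y : {x : G // x ∉ solRadical G}, x ≠ y →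
      IsSolvable (Subgroup.closure {(x : G), (y : G)}) →
      ((x ∈ A₁ ∧ y ∈ A₂) ∨ (x ∈ A₂ ∧ y ∈ A₁)) := by
    intro x y hne hs
    exact (hbip x y hne).mp ⟨hne, hs⟩
  have hsame : ∀ x y : {x : G // x ∉ solRadical G}, x ≠ y →
      ¬ IsSolvable (Subgroup.closure {(x : G), (y : G)}) →
      ((x ∈ A₁ ∧ y ∈ A₁) ∨ (x ∈ A₂ ∧ y ∈ A₂)) := by
    intro x y hne hs
    have h := (hbip x y hne).mpr
    rcases hmem x with h1 | h1 <;> rcases hmem y with h2 | h2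
    · exact Or.inl ⟨h1, h2⟩
    · exact absurd (h (Or.inl ⟨h1, h2⟩)).2 hs
    · exact absurd (h (Or.inr ⟨h1, h2⟩)).2 hs
    · exact Or.inr ⟨h1, h2⟩
  -- every vertex is an involution
  have hinv : ∀ x : {x : G // x ∉ solRadical G}, (x : G) * (x : G) = 1 := by
    intro x
    by_contra hx2
    have hxinv : (x : G) ≠ (x : G)⁻¹ := by
      intro h
      apply hx2
      nth_rewrite 2 [h]
      exact mul_inv_cancel _
    -- x⁻¹ is a vertex
    have hxinvSol : (x : G)⁻¹ ∉ solRadical G := by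
      intro h
      apply x.2
      intro v
      rw [← closure_pair_inv]
      exact h v
    set xi : {x : G // x ∉ solRadical G} := ⟨(x : G)⁻¹, hxinvSol⟩ with hxi
    have hxnexi : x ≠ xi := fun h => hxinv (congrArg Subtype.val h)
    -- x and x⁻¹ generate a solvable (cyclic) group, so they are in different parts
    have hsolxxi : IsSolvable (Subgroup.closure {(x : G), (xi : G)}) :=
      solvable_closure_pair_inv (x : G)
    have hdiff := hcross x xi hxnexi hsolxxi
    -- a witness y with ⟨x, y⟩ nonsolvable
    obtain ⟨y, hy⟩ : ∃ y : G, ¬ IsSolvable (Subgroup.closure {(x : G), y}) := by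
      by_contra h
      push_neg at h
      exact x.2 h
    have hySol : y ∉ solRadical G := by
      intro h
      exact hy (by rw [Set.pair_comm]; exact h (x : G))
    set yv : {x : G // x ∉ solRadical G} := ⟨y, hySol⟩ with hyv
    have hxney : x ≠ yv := by
      intro h
      apply hy
      have hc : (x : G) = y := congrArg Subtype.val h
      rw [← hc]
      exact solvable_closure_pair_self _
    have hxiney : xi ≠ yv := by
      intro h
      apply hy
      have hc : (x : G)⁻¹ = y := congrArg Subtype.val h
      rw [← hc]
      exact solvable_closure_pair_inv _
    have hyns : ¬ IsSolvable (Subgroup.closure {(xi : G), (yv : G)}) := by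
      show ¬ IsSolvable (Subgroup.closure {(x : G)⁻¹, y})
      rw [closure_pair_inv]
      exact hy
    have hsame1 := hsame x yv hxney hy
    have hsame2 := hsame xi yv hxiney hyns
    rcases hsame1 with ⟨h1, h2⟩ | ⟨h1, h2⟩ <;> rcases hsame2 with ⟨h3, h4⟩ | ⟨h3, h4⟩ <;>
      rcases hdiff with ⟨h5, h6⟩ | ⟨h5, h6⟩ <;>
      first
      | exact hnotboth yv h2 h4
      | exact hnotboth yv h4 h2
      | exact hnotboth x h1 h5
      | exact hnotboth x h5 h1
      | exact hnotboth xi h3 h6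
      | exact hnotboth xi h6 h3
  -- final contradiction from the vertex u
  obtain ⟨w, hw⟩ : ∃ w : G, ¬ IsSolvable (Subgroup.closure {(u : G), w}) := by
    by_contra h
    push_neg at h
    exact u.2 h
  have hwSol : w ∉ solRadical G := by
    intro h
    exact hw (by rw [Set.pair_comm]; exact h (u : G))
  set wv : {x : G // x ∉ solRadical G} := ⟨w, hwSol⟩ with hwv
  -- t = u * w is also a vertex
  have htSol : (u : G) * w ∉ solRadical G := by
    intro h
    apply hw
    have hsol : IsSolvable (Subgroup.closure {(u : G) * w, (u : G)}) := h (u : G)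
    have hle : Subgroup.closure {(u : G), w} ≤ Subgroup.closure {(u : G) * w, (u : G)} := by
      refine closure_pair_le (mem_closure_pair_right _ _) ?_
      have h1 : (u : G) ∈ Subgroup.closure {(u : G) * w, (u : G)} :=
        mem_closure_pair_right _ _
      have h2 : (u : G) * w ∈ Subgroup.closure {(u : G) * w, (u : G)} :=
        mem_closure_pair_left _ _
      have h3 : (u : G)⁻¹ * ((u : G) * w) ∈ Subgroup.closure {(u : G) * w, (u : G)} :=
        Subgroup.mul_mem _ (inv_mem h1) h2
      simpa [mul_assoc] using h3
    exact @my_solvable_of_le _ _ _ _ hsol hle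
  set tv : {x : G // x ∉ solRadical G} := ⟨(u : G) * w, htSol⟩ with htv
  -- u, w, t are all involutions, hence u and w commute
  have hu2 := hinv u
  have hw2 : w * w = 1 := hinv wv
  have ht2 : ((u : G) * w) * ((u : G) * w) = 1 := hinv tv
  have hcomm : (u : G) * w = w * (u : G) := by
    have h1 : ((u : G) * w)⁻¹ = (u : G) * w := inv_eq_of_mul_eq_one_left ht2
    have h2 : (u : G)⁻¹ = (u : G) := inv_eq_of_mul_eq_one_left hu2
    have h3 : w⁻¹ = w := inv_eq_of_mul_eq_one_left hw2
    calc (u : G) * w = ((u : G) * w)⁻¹ := h1.symm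
    _ = w⁻¹ * (u : G)⁻¹ := mul_inv_rev _ _
    _ = w * (u : G) := by rw [h2, h3]
  exact hw (solvable_closure_of_comm hcomm)
end

section
/- Let G be a finite non-solvable group and n ≥ 2 a positive integer. Then the solvable graph Γ_s(G) is not complete n-partite, i.e., there is no partition of the vertex set G \ Sol(G) into n nonempty parts such that two distinct vertices are adjacent in Γ_s(G) if and only if they lie in different parts. -/
lemma auxSolvMono {G : Type*} [Group G] {A B : Subgroup G} (h : A ≤ B) (hB : IsSolvable B) :
    IsSolvable A :=
  by haveI : Group.IsSolvable B := hB; exact solvable_of_solvable_injective (Subgroup.inclusion_injective h)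

lemma auxCommSolv {G : Type*} [Group G] (x y : G) (h : x * y = y * x) :
    IsSolvable (Subgroup.closure {x, y}) := by
  have hc : Commute x y := h
  let φ : Multiplicative ℤ × Multiplicative ℤ →* G :=
    (zpowersHom G x).noncommCoprod (zpowersHom G y) (fun m n => hc.zpow_zpow _ _)
  have hle : Subgroup.closure {x, y} ≤ φ.range := by
    rw [Subgroup.closure_le]
    rintro z (rfl | rfl)
    · exact ⟨(Multiplicative.ofAdd 1, 1), by simp [φ, MonoidHom.noncommCoprod]⟩
    · exact ⟨(1, Multiplicative.ofAdd 1), by simp [φ, MonoidHom.noncommCoprod]⟩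
  have : IsSolvable φ.range := solvable_of_surjective φ.rangeRestrict_surjective
  exact auxSolvMono hle this

lemma auxMemL {G : Type*} [Group G] (x y : G) : x ∈ Subgroup.closure {x, y} :=
  Subgroup.subset_closure (by simp)

lemma auxMemR {G : Type*} [Group G] (x y : G) : y ∈ Subgroup.closure {x, y} :=
  Subgroup.subset_closure (by simp)



/-- For `n ≥ 2`, the solvable graph of a finite non-solvable group is not
complete `n`-partite. -/
theorem solvableGraph_not_complete_multipartite {G : Type*} [Group G] [Fintype G]
    (hG : ¬ IsSolvable G) (n : ℕ) (hn : 2 ≤ n) :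
    ¬ ∃ P : Fin n → Set {x : G // x ∉ solRadical G},
        (∀ i, (P i).Nonempty) ∧
        (∀ v : {x : G // x ∉ solRadical G}, ∃! i, v ∈ P i) ∧
        ∀ v w : {x : G // x ∉ solRadical G}, v ≠ w →
          ((solvableGraph G).Adj v w ↔ ¬ ∃ i, v ∈ P i ∧ w ∈ P i) := by
  rintro ⟨P, hne, huniq, hadj⟩
  let V := {x : G // x ∉ solRadical G}
  let sp : V → V → Prop := fun x y => ∃ i, x ∈ P i ∧ y ∈ P i
  have sp_symm : ∀ {x y}, sp x y → sp y x := by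
    rintro x y ⟨i, h1, h2⟩; exact ⟨i, h2, h1⟩
  have sp_trans : ∀ {x y z}, sp x y → sp y z → sp x z := by
    rintro x y z ⟨i, h1, h2⟩ ⟨j, h3, h4⟩
    obtain ⟨k, -, hk⟩ := huniq y
    have : i = j := (hk i h2).trans (hk j h3).symm
    exact ⟨j, this ▸ h1, h4⟩
  have sp_of_ns : ∀ (x y : V), x ≠ y →
      ¬ IsSolvable (Subgroup.closure {(x : G), (y : G)}) → sp x y := by
    intro x y hxy hns
    by_contra hnsp
    exact hns (((hadj x y hxy).mpr hnsp).2)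
  have ns_of_sp : ∀ (x y : V), x ≠ y → sp x y →
      ¬ IsSolvable (Subgroup.closure {(x : G), (y : G)}) := by
    intro x y hxy hsp' hs
    exact ((hadj x y hxy).mp ⟨hxy, hs⟩) hsp'
  obtain ⟨a, _⟩ := hne ⟨0, by omega⟩
  have ha := a.2
  simp only [solRadical, Set.mem_setOf_eq, not_forall] at ha
  obtain ⟨w, hw⟩ := ha
  set u : G := (a : G) with hu_def
  have hwV : w ∉ solRadical G := by
    intro h
    exact hw (by rw [Set.pair_comm]; exact h u)
  set b : V := ⟨w, hwV⟩ with hb_def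
  have huw : u ≠ w := by
    rintro rfl
    exact hw (auxCommSolv u u rfl)
  have hab : a ≠ b := fun h => huw (congrArg Subtype.val h)
  have hspab : sp a b := sp_of_ns a b hab hw
  have key : ∀ s : Set G, u ∈ Subgroup.closure s → w ∈ Subgroup.closure s →
      ¬ IsSolvable (Subgroup.closure s) := by
    intro s h1 h2 hs
    exact hw (auxSolvMono (by rw [Subgroup.closure_le]; rintro z (rfl | rfl) <;> assumption) hs)
  by_cases h1 : u = u⁻¹
  · by_cases h2 : w = w⁻¹
    · by_cases h3 : u * w = w * u
      · exact hw (auxCommSolv u w h3)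
      · -- consider c = u*w, d = w*u = (u*w)⁻¹
        have hxns : ¬ IsSolvable (Subgroup.closure {u, u * w}) := by
          apply key
          · exact auxMemL _ _
          · have hm : u⁻¹ * (u * w) ∈ Subgroup.closure {u, u * w} :=
              mul_mem (inv_mem (auxMemL _ _)) (auxMemR _ _)
            simpa using hm
        have hyns : ¬ IsSolvable (Subgroup.closure {w, w * u}) := by
          apply key
          · have hm : w⁻¹ * (w * u) ∈ Subgroup.closure {w, w * u} :=
              mul_mem (inv_mem (auxMemL _ _)) (auxMemR _ _)
            simpa using hm
          · exact auxMemL _ _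
        have hxV : (u * w) ∉ solRadical G := by
          intro h
          exact hxns (by rw [Set.pair_comm]; exact h u)
        have hyV : (w * u) ∉ solRadical G := by
          intro h
          exact hyns (by rw [Set.pair_comm]; exact h w)
        set c : V := ⟨u * w, hxV⟩ with hc_def
        set d : V := ⟨w * u, hyV⟩ with hd_def
        have hac : a ≠ c := by
          intro h
          have h' : u = u * w := congrArg Subtype.val h
          have hw1 : w = 1 := (left_eq_mul.mp h')
          exact hw (by rw [hw1]; exact auxCommSolv u 1 (by group))
        have hbd : b ≠ d := by
          intro h
          have h' : w = w * u := congrArg Subtype.val h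
          have hu1 : u = 1 := (left_eq_mul.mp h')
          exact hw (by rw [hu1]; exact auxCommSolv 1 w (by group))
        have hcd : c ≠ d := fun h => h3 (congrArg Subtype.val h)
        have hspac : sp a c := sp_of_ns a c hac hxns
        have hspbd : sp b d := sp_of_ns b d hbd hyns
        have hspcd : sp c d := sp_trans (sp_trans (sp_symm hspac) hspab) hspbd
        apply ns_of_sp c d hcd hspcd
        have hinv : w * u = (u * w)⁻¹ := by
          rw [mul_inv_rev, ← h1, ← h2]
        show IsSolvable (Subgroup.closure {u * w, w * u})
        rw [hinv]
        exact auxCommSolv _ _ (by group)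
    · -- w ≠ w⁻¹ : consider f = w⁻¹, same part as a, hence as b
      have hfns : ¬ IsSolvable (Subgroup.closure {u, w⁻¹}) := by
        apply key
        · exact auxMemL _ _
        · have hm := inv_mem (auxMemR u w⁻¹)
          simpa using hm
      have hfV : w⁻¹ ∉ solRadical G := by
        intro h
        exact hfns (by rw [Set.pair_comm]; exact h u)
      set f : V := ⟨w⁻¹, hfV⟩ with hf_def
      have haf : a ≠ f := by
        intro h
        have h' : u = w⁻¹ := congrArg Subtype.val h
        apply hw
        rw [h']
        exact Set.pair_comm w⁻¹ w ▸ auxCommSolv w w⁻¹ (by group)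
      have hbf : b ≠ f := fun h => h2 (congrArg Subtype.val h)
      have hspaf : sp a f := sp_of_ns a f haf hfns
      have hspbf : sp b f := sp_trans (sp_symm hspab) hspaf
      apply ns_of_sp b f hbf hspbf
      exact auxCommSolv w w⁻¹ (by group)
  · -- u ≠ u⁻¹ : consider e = u⁻¹, same part as b, hence as a
    have hens : ¬ IsSolvable (Subgroup.closure {u⁻¹, w}) := by
      apply key
      · have hm := inv_mem (auxMemL u⁻¹ w)
        simpa using hm
      · exact auxMemR _ _
    have heV : u⁻¹ ∉ solRadical G := fun h => hens (h w)
    set e : V := ⟨u⁻¹, heV⟩ with he_def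
    have hbe : b ≠ e := by
      intro h
      have h' : w = u⁻¹ := congrArg Subtype.val h
      apply hw
      rw [h']
      exact auxCommSolv u u⁻¹ (by group)
    have hae : a ≠ e := fun h => h1 (congrArg Subtype.val h)
    have hspbe : sp b e := sp_of_ns b e hbe (by
      show ¬ IsSolvable (Subgroup.closure {w, u⁻¹})
      rw [Set.pair_comm]; exact hens)
    have hspae : sp a e := sp_trans hspab hspbe
    apply ns_of_sp a e hae hspae
    exact auxCommSolv u u⁻¹ (by group)
end
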